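/- Let G be a finite group and L an involutive anti-automorphism of G, and define τ(g) = L(g⁻¹) (an involutive automorphism of G). For an irreducible character χ satisfying χ(L(g)) = χ(g) for all g, the twisted Frobenius–Schur indicator c_τ(χ) = |G|⁻¹ Σ_{g∈G} χ(g τ(g)) equals ±1. -/

import Mathlib

open CategoryTheory

open Matrix
set_option linter.unusedSectionVars false
variable {n : Type} [Fintype n] [DecidableEq n]

lemma repr_stdBasis (M : Matrix n n ℂ) (p : n × n) :
    (Matrix.stdBasis ℂ n n).repr M p = M p.1 p.2 := by
  have h : M = ∑ q : n × n, M q.1 q.2 • Matrix.stdBasis ℂ n n q := by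
    rw [Fintype.sum_prod_type]
    simp only [Matrix.stdBasis_eq_single, Matrix.smul_single, smul_eq_mul, mul_one]
    exact matrix_eq_sum_single M
  conv_lhs => rw [h]
  simp [Finsupp.single_apply, Finset.sum_ite_eq', Module.Basis.repr_self]

lemma trace_matrixMap (f : Matrix n n ℂ →ₗ[ℂ] Matrix n n ℂ) :
    LinearMap.trace ℂ (Matrix n n ℂ) f
      = ∑ i : n, ∑ j : n, f (Matrix.single i j 1) i j := by
  rw [LinearMap.trace_eq_matrix_trace ℂ (Matrix.stdBasis ℂ n n) f]
  rw [Matrix.trace]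
  rw [Fintype.sum_prod_type]
  refine Finset.sum_congr rfl fun i _ => Finset.sum_congr rfl fun j _ => ?_
  rw [Matrix.diag_apply, LinearMap.toMatrix_apply, repr_stdBasis,
    Matrix.stdBasis_eq_single]

noncomputable def sand (A B : Matrix n n ℂ) : Matrix n n ℂ →ₗ[ℂ] Matrix n n ℂ :=
  (LinearMap.mulLeft ℂ A) ∘ₗ (LinearMap.mulRight ℂ B)

noncomputable def sandT (A B : Matrix n n ℂ) : Matrix n n ℂ →ₗ[ℂ] Matrix n n ℂ :=
  sand A B ∘ₗ (Matrix.transposeLinearEquiv n n ℂ ℂ).toLinearMap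

@[simp] lemma sand_apply (A B M : Matrix n n ℂ) : sand A B M = A * M * B := by
  simp [sand, LinearMap.mulLeft_apply, LinearMap.mulRight_apply, mul_assoc]

@[simp] lemma sandT_apply (A B M : Matrix n n ℂ) : sandT A B M = A * Mᵀ * B := by
  simp [sandT, sand, Matrix.transposeLinearEquiv, mul_assoc]

lemma trace_sand (A B : Matrix n n ℂ) :
    LinearMap.trace ℂ (Matrix n n ℂ) (sand A B) = A.trace * B.trace := by
  rw [trace_matrixMap]
  simp only [sand_apply]
  have h : ∀ i j : n, ((A * Matrix.single i j (1:ℂ) * B : Matrix n n ℂ)) i j = A i i * B j j := by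
    intro i j
    rw [Matrix.mul_apply]
    simp [Matrix.mul_apply, Matrix.single, Matrix.of_apply, Finset.sum_ite_eq,
      ite_and, Finset.mul_sum]
  simp only [h, Matrix.trace, Matrix.diag_apply, Finset.sum_mul_sum]

lemma sand_comp_sand (A B C D : Matrix n n ℂ) :
    sand A B ∘ₗ sand C D = sand (A * C) (D * B) := by
  ext M : 1; simp [mul_assoc]

lemma sand_comp_sandT (A B C D : Matrix n n ℂ) :
    sand A B ∘ₗ sandT C D = sandT (A * C) (D * B) := by
  ext M : 1; simp [mul_assoc]

lemma sandT_comp_sand (A B C D : Matrix n n ℂ) :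
    sandT A B ∘ₗ sand C D = sandT (A * Dᵀ) (Cᵀ * B) := by
  ext M : 1; simp [Matrix.transpose_mul, mul_assoc]

lemma sandT_comp_sandT (A B C D : Matrix n n ℂ) :
    sandT A B ∘ₗ sandT C D = sand (A * Dᵀ) (Cᵀ * B) := by
  ext M : 1; simp [Matrix.transpose_mul, mul_assoc]

lemma trace_sandT (A B : Matrix n n ℂ) :
    LinearMap.trace ℂ (Matrix n n ℂ) (sandT A B) = (Aᵀ * B).trace := by
  rw [trace_matrixMap]
  simp only [sandT_apply]
  have h : ∀ i j : n, ((A * (Matrix.single i j (1:ℂ))ᵀ * B : Matrix n n ℂ)) i j = A i j * B i j := by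
    intro i j
    rw [Matrix.mul_apply]
    simp [Matrix.mul_apply, Matrix.single, Matrix.transpose_apply, Matrix.of_apply,
      Finset.sum_ite_eq, ite_and, Finset.mul_sum]
  simp only [h, Matrix.trace, Matrix.diag_apply, Matrix.mul_apply, Matrix.transpose_apply]
  rw [Finset.sum_comm]



/-- let `G` be a finite group, `L` an involutive anti-automorphism of `G`,
and `τ g = L g⁻¹` the associated involutive automorphism.  For any irreducible complex
character `χ` with `χ (L g) = χ g` for all `g`, the twisted Frobenius–Schur indicator
`c_τ(χ) = |G|⁻¹ Σ_g χ (g · τ(g))` equals `±1`. -/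
theorem gelfand_stmt9 {G : Type} [Group G] [Fintype G]
    (L : G → G)
    (hanti : ∀ g h : G, L (g * h) = L h * L g) (hinv : ∀ g : G, L (L g) = g)
    (V : FDRep ℂ G) (hV : Simple V)
    (hLchar : ∀ g : G, V.character (L g) = V.character g) :
    (Fintype.card G : ℂ)⁻¹ * ∑ g : G, V.character (g * L g⁻¹) = 1 ∨
    (Fintype.card G : ℂ)⁻¹ * ∑ g : G, V.character (g * L g⁻¹) = -1 := by
  classical
  haveI := hV
  -- basic facts about L and τ
  have hL1 : L 1 = 1 := by simpa using hanti 1 1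
  have hLinv : ∀ g : G, L g⁻¹ = (L g)⁻¹ := by
    intro g
    refine eq_inv_of_mul_eq_one_left ?_
    rw [← hanti]; simp [hL1]
  set τ : G → G := fun g => L g⁻¹ with hτdef
  have hτmul : ∀ g h : G, τ (g * h) = τ g * τ h := by
    intro g h
    show L (g*h)⁻¹ = L g⁻¹ * L h⁻¹
    rw [_root_.mul_inv_rev, hanti]
  have hτinvol : ∀ g : G, τ (τ g) = g := by
    intro g
    show L (L g⁻¹)⁻¹ = g
    rw [hLinv, hinv, inv_inv]
  have hcharτ : ∀ g : G, V.character (τ g) = V.character g⁻¹ := fun g => hLchar g⁻¹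
  -- matrix picture
  let b := Module.Free.chooseBasis ℂ V
  set ι := Module.Free.ChooseBasisIndex ℂ V with hι
  let R : G → Matrix ι ι ℂ := fun g => LinearMap.toMatrix b b (V.ρ g)
  have hRmul : ∀ g h : G, R (g * h) = R g * R h := by
    intro g h
    show LinearMap.toMatrix b b (V.ρ (g*h)) = _
    rw [_root_.map_mul]
    exact LinearMap.toMatrix_mul b _ _
  have hchar : ∀ g : G, V.character g = (R g).trace := by
    intro g
    exact LinearMap.trace_eq_matrix_trace ℂ b _
  set N : ℂ := (Fintype.card G : ℂ) with hN
  have hN0 : N ≠ 0 := Nat.cast_ne_zero.mpr Fintype.card_ne_zero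
  -- the two averaged operators
  set F : G → (Matrix ι ι ℂ →ₗ[ℂ] Matrix ι ι ℂ) := fun g => sand (R (τ g))ᵀ (R g) with hF
  set Gm : G → (Matrix ι ι ℂ →ₗ[ℂ] Matrix ι ι ℂ) := fun g => sandT (R g)ᵀ (R (τ g)) with hGm
  set P : Matrix ι ι ℂ →ₗ[ℂ] Matrix ι ι ℂ := N⁻¹ • ∑ g : G, F g with hP
  set T : Matrix ι ι ℂ →ₗ[ℂ] Matrix ι ι ℂ := N⁻¹ • ∑ g : G, Gm g with hT
  -- composition identities
  have keyFF : ∀ h g : G, F h ∘ₗ F g = F (g * h) := by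
    intro h g
    show sand _ _ ∘ₗ sand _ _ = _
    rw [sand_comp_sand, ← Matrix.transpose_mul, ← hRmul, ← hRmul, ← hτmul]
  have keyFG : ∀ h g : G, F h ∘ₗ Gm g = Gm (g * τ h) := by
    intro h g
    show sand _ _ ∘ₗ sandT _ _ = _
    rw [sand_comp_sandT, ← Matrix.transpose_mul, ← hRmul, ← hRmul, hGm]
    have h1 : g * τ h = g * τ h := rfl
    have h2 : τ g * h = τ (g * τ h) := by rw [hτmul, hτinvol]
    rw [h2]
  have keyGF : ∀ g h : G, Gm g ∘ₗ F h = Gm (h * g) := by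
    intro g h
    show sandT _ _ ∘ₗ sand _ _ = _
    rw [sandT_comp_sand, Matrix.transpose_transpose, ← Matrix.transpose_mul,
      ← hRmul, ← hRmul, ← hτmul]
  have keyGG : ∀ g h : G, Gm g ∘ₗ Gm h = F (h * τ g) := by
    intro g h
    show sandT _ _ ∘ₗ sandT _ _ = _
    rw [sandT_comp_sandT, Matrix.transpose_transpose, ← Matrix.transpose_mul,
      ← hRmul, ← hRmul, hF]
    have h2 : τ h * g = τ (h * τ g) := by rw [hτmul, hτinvol]
    rw [h2]
  -- operator-level identities
  have sumFF : (∑ h : G, F h) * (∑ g : G, F g) = N • ∑ g : G, F g := by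
    rw [Finset.sum_mul_sum]
    calc ∑ h : G, ∑ g : G, F h * F g = ∑ h : G, ∑ g : G, F (g * h) := by
          refine Finset.sum_congr rfl fun h _ => Finset.sum_congr rfl fun g _ => ?_
          rw [Module.End.mul_eq_comp, keyFF]
      _ = ∑ _h : G, ∑ g : G, F g :=
          Finset.sum_congr rfl fun h _ =>
            Fintype.sum_equiv (Equiv.mulRight h) _ _ (fun g => rfl)
      _ = N • ∑ g : G, F g := by
          rw [Finset.sum_const, hN, Nat.cast_smul_eq_nsmul]; simp
  have sumFG : (∑ h : G, F h) * (∑ g : G, Gm g) = N • ∑ g : G, Gm g := by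
    rw [Finset.sum_mul_sum]
    calc ∑ h : G, ∑ g : G, F h * Gm g = ∑ h : G, ∑ g : G, Gm (g * τ h) := by
          refine Finset.sum_congr rfl fun h _ => Finset.sum_congr rfl fun g _ => ?_
          rw [Module.End.mul_eq_comp, keyFG]
      _ = ∑ _h : G, ∑ g : G, Gm g :=
          Finset.sum_congr rfl fun h _ =>
            Fintype.sum_equiv (Equiv.mulRight (τ h)) _ _ (fun g => rfl)
      _ = N • ∑ g : G, Gm g := by
          rw [Finset.sum_const, hN, Nat.cast_smul_eq_nsmul]; simp
  have sumGF : (∑ g : G, Gm g) * (∑ h : G, F h) = N • ∑ g : G, Gm g := by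
    rw [Finset.sum_mul_sum]
    calc ∑ g : G, ∑ h : G, Gm g * F h = ∑ g : G, ∑ h : G, Gm (h * g) := by
          refine Finset.sum_congr rfl fun g _ => Finset.sum_congr rfl fun h _ => ?_
          rw [Module.End.mul_eq_comp, keyGF]
      _ = ∑ _g : G, ∑ h : G, Gm h :=
          Finset.sum_congr rfl fun g _ =>
            Fintype.sum_equiv (Equiv.mulRight g) _ _ (fun h => rfl)
      _ = N • ∑ g : G, Gm g := by
          rw [Finset.sum_const, hN, Nat.cast_smul_eq_nsmul]; simp
  have sumGG : (∑ g : G, Gm g) * (∑ h : G, Gm h) = N • ∑ g : G, F g := by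
    rw [Finset.sum_mul_sum]
    calc ∑ g : G, ∑ h : G, Gm g * Gm h = ∑ g : G, ∑ h : G, F (h * τ g) := by
          refine Finset.sum_congr rfl fun g _ => Finset.sum_congr rfl fun h _ => ?_
          rw [Module.End.mul_eq_comp, keyGG]
      _ = ∑ _g : G, ∑ h : G, F h :=
          Finset.sum_congr rfl fun g _ =>
            Fintype.sum_equiv (Equiv.mulRight (τ g)) _ _ (fun h => rfl)
      _ = N • ∑ g : G, F g := by
          rw [Finset.sum_const, hN, Nat.cast_smul_eq_nsmul]; simp
  have hscal : N⁻¹ * N⁻¹ * N = N⁻¹ := by field_simp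
  have hPP : P * P = P := by
    rw [hP, smul_mul_assoc, mul_smul_comm, sumFF, smul_smul, smul_smul, hscal]
  have hPT : P * T = T := by
    rw [hP, hT, smul_mul_assoc, mul_smul_comm, sumFG, smul_smul, smul_smul, hscal]
  have hTP : T * P = T := by
    rw [hP, hT, smul_mul_assoc, mul_smul_comm, sumGF, smul_smul, smul_smul, hscal]
  have hTT : T * T = P := by
    rw [hP, hT, smul_mul_assoc, mul_smul_comm, sumGG, smul_smul, smul_smul, hscal]
  -- traces
  have trF : ∀ g : G, LinearMap.trace ℂ (Matrix ι ι ℂ) (F g)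
      = V.character g⁻¹ * V.character g := by
    intro g
    rw [hF]
    show LinearMap.trace ℂ (Matrix ι ι ℂ) (sand (R (τ g))ᵀ (R g)) = _
    rw [trace_sand, Matrix.trace_transpose, ← hchar, ← hchar, hcharτ]
  have trGm : ∀ g : G, LinearMap.trace ℂ (Matrix ι ι ℂ) (Gm g)
      = V.character (g * L g⁻¹) := by
    intro g
    rw [hGm]
    show LinearMap.trace ℂ (Matrix ι ι ℂ) (sandT (R g)ᵀ (R (τ g))) = _
    rw [trace_sandT, Matrix.transpose_transpose, ← hRmul, ← hchar]
  have trP : LinearMap.trace ℂ (Matrix ι ι ℂ) P = 1 := by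
    letI hinv1 : Invertible ((Nat.card G : ℂ)) :=
      invertibleOfNonzero (by rw [← Fintype.card_eq_nat_card]; exact hN0)
    have horth := FDRep.char_orthonormal V V
    rw [if_pos ⟨Iso.refl V⟩] at horth
    have horth' : (Fintype.card G : ℂ)⁻¹ * (∑ g : G, V.character g * V.character g⁻¹) = 1 := by
      rw [Fintype.card_eq_nat_card]; exact_mod_cast horth
    rw [hP, _root_.map_smul, map_sum]
    simp only [trF]
    rw [smul_eq_mul]
    calc N⁻¹ * ∑ g : G, V.character g⁻¹ * V.character g
        = N⁻¹ * ∑ g : G, V.character g * V.character g⁻¹ := by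
          congr 1; exact Finset.sum_congr rfl fun g _ => mul_comm _ _
      _ = 1 := by rw [hN]; exact horth'
  have trT : LinearMap.trace ℂ (Matrix ι ι ℂ) T
      = N⁻¹ * ∑ g : G, V.character (g * L g⁻¹) := by
    rw [hT, _root_.map_smul, map_sum, smul_eq_mul]
    congr 1
    exact Finset.sum_congr rfl fun g _ => trGm g
  -- projection argument
  obtain ⟨p, hp⟩ := (LinearMap.isProj_iff_isIdempotentElem P).mpr
    (hPP)
  have htr := hp.trace
  rw [trP] at htr
  have hrank : Module.finrank ℂ p = 1 := by exact_mod_cast htr.symm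
  rw [finrank_eq_one_iff'] at hrank
  obtain ⟨v₀, hv0, hspan⟩ := hrank
  set M₀ : Matrix ι ι ℂ := (v₀ : Matrix ι ι ℂ) with hM₀
  have hM0 : M₀ ≠ 0 := fun h => hv0 (Subtype.ext h)
  have hM0p : M₀ ∈ p := v₀.2
  have hTmem : ∀ M : Matrix ι ι ℂ, T M ∈ p := by
    intro M
    have h1 : P (T M) = T M := by rw [← Module.End.mul_apply, hPT]
    exact h1 ▸ hp.map_mem (T M)
  obtain ⟨c, hc⟩ := hspan ⟨T M₀, hTmem M₀⟩
  have hcM : T M₀ = c • M₀ := by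
    have := congrArg Subtype.val hc
    simpa using this.symm
  have hc2 : c * c = 1 := by
    have h1 : T (T M₀) = M₀ := by
      rw [← Module.End.mul_apply, hTT]; exact hp.map_id _ hM0p
    rw [hcM, _root_.map_smul, hcM, smul_smul] at h1
    have h2 : (c * c - 1) • M₀ = 0 := by rw [sub_smul, one_smul, h1, sub_self]
    rcases smul_eq_zero.mp h2 with h | h
    · exact sub_eq_zero.mp h
    · exact absurd h hM0
  have hTcP : T = c • P := by
    ext M
    obtain ⟨a, ha⟩ := hspan ⟨P M, hp.map_mem M⟩
    have haM : P M = a • M₀ := by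
      have := congrArg Subtype.val ha
      simpa using this.symm
    have h1 : T M = T (P M) := by rw [← Module.End.mul_apply, hTP]
    rw [h1, haM, _root_.map_smul, hcM, LinearMap.smul_apply, haM, smul_smul, smul_smul, mul_comm]
  have hfinal : N⁻¹ * ∑ g : G, V.character (g * L g⁻¹) = c := by
    rw [← trT, hTcP, _root_.map_smul, trP, smul_eq_mul, mul_one]
  rw [hN] at hfinal
  rw [hfinal]
  exact mul_self_eq_one_iff.mp hc2
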